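/- arXiv:1803.11443 — 3 statements merged into one kernel-verified Lean document; each statement's English description precedes it below -/
import Mathlib

section
/- For x, y ∈ ℝ³ with x ≠ y, let P(x,y) = I − (x−y)(x−y)ᵀ/|x−y|² be the orthogonal projection onto the plane perpendicular to x−y. Let x_r, x_s, y₀ be three non-collinear points, and let θ_r (resp. θ_s) be the angle at vertex x_r (resp. x_s) of the triangle with vertices x_r, x_s, y₀. Then the matrix M = P(x_r, y₀) P(x_s, x_r) P(y₀, x_s) has rank 2, its nonzero singular values are 1 and |cos θ_r cos θ_s|, and hence its condition number (ratio of largest to smallest nonzero singular value) equals 1/|cos θ_r cos θ_s|, provided cos θ_r cos θ_s ≠ 0. -/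
open Matrix RealInnerProductSpace

set_option maxHeartbeats 2000000 in
private lemma aux (a b : Fin 3 → ℝ) (na nb nc k : ℝ)
    (hna2 : na^2 = a 0^2+a 1^2+a 2^2) (hna : 0 < na)
    (hnb2 : nb^2 = b 0^2+b 1^2+b 2^2) (hnb : 0 < nb)
    (hnc2 : nc^2 = (b 0-a 0)^2+(b 1-a 1)^2+(b 2-a 2)^2) (hnc : 0 < nc)
    (hN : 0 < (a 0^2+a 1^2+a 2^2)*(b 0^2+b 1^2+b 2^2) - (a 0*b 0+a 1*b 1+a 2*b 2)^2)
    (hk : k = -((a 0*b 0+a 1*b 1+a 2*b 2) * (a 0*(b 0-a 0)+a 1*(b 1-a 1)+a 2*(b 2-a 2))) / (na^2*nb*nc))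
    (hk0 : k ≠ 0) (hk1 : |k| ≤ 1)
    (P1 P2 P3 : Matrix (Fin 3) (Fin 3) ℝ)
    (hP1 : ∀ i j, P1 i j = (if i = j then (1:ℝ) else 0) - b i * b j/nb^2)
    (hP2 : ∀ i j, P2 i j = (if i = j then (1:ℝ) else 0) - a i * a j/na^2)
    (hP3 : ∀ i j, P3 i j = (if i = j then (1:ℝ) else 0) - (b i - a i)*(b j - a j)/nc^2) :
    (P1*P2*P3).rank = 2 ∧ ∃ U V : Matrix (Fin 3) (Fin 2) ℝ, Uᵀ*U = 1 ∧ Vᵀ*V = 1 ∧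
      P1*P2*P3 = U * Matrix.diagonal ![1,|k|] * Vᵀ ∧
      (1:ℝ)/|k| = max 1 |k| / min 1 |k| := by
  set AB := a 0*b 0+a 1*b 1+a 2*b 2 with hAB
  set AC := a 0*(b 0-a 0)+a 1*(b 1-a 1)+a 2*(b 2-a 2) with hACd
  set N := (a 0^2+a 1^2+a 2^2)*(b 0^2+b 1^2+b 2^2) - AB^2 with hNdef
  have hN' : 0 < N := hN
  set sn := Real.sqrt N with hsndef
  have hsn2 : sn^2 = N := Real.sq_sqrt hN'.le
  have hsn0 : 0 < sn := Real.sqrt_pos.mpr hN'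
  set n0 := a 1*b 2 - a 2*b 1 with hn0
  set n1 := a 2*b 0 - a 0*b 2 with hn1
  set n2 := a 0*b 1 - a 1*b 0 with hn2
  set u0 := b 1*n2 - b 2*n1 with hu0
  set u1 := b 2*n0 - b 0*n2 with hu1
  set u2 := b 0*n1 - b 1*n0 with hu2
  set w0 := (b 1-a 1)*n2 - (b 2-a 2)*n1 with hw0
  set w1 := (b 2-a 2)*n0 - (b 0-a 0)*n2 with hw1
  set w2 := (b 0-a 0)*n1 - (b 1-a 1)*n0 with hw2
  have hnn : n0^2+n1^2+n2^2 = N := by rw [hn0,hn1,hn2,hNdef,hAB]; ring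
  have hnu : n0*u0+n1*u1+n2*u2 = 0 := by rw [hu0,hu1,hu2,hn0,hn1,hn2]; ring
  have hnw : n0*w0+n1*w1+n2*w2 = 0 := by rw [hw0,hw1,hw2,hn0,hn1,hn2]; ring
  have huu : u0^2+u1^2+u2^2 = nb^2*N := by
    rw [hu0,hu1,hu2,hn0,hn1,hn2,hnb2,hNdef,hAB]; ring
  have hww : w0^2+w1^2+w2^2 = nc^2*N := by
    rw [hw0,hw1,hw2,hn0,hn1,hn2,hnc2,hNdef,hAB]; ring
  set σ := -(k/|k|) with hσd
  have hkabs : |k| ≠ 0 := abs_ne_zero.mpr hk0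
  have hσ2 : σ^2 = 1 := by
    rw [hσd, neg_sq, div_pow, sq_abs, div_self (pow_ne_zero 2 hk0)]
  have hσK : σ * |k| = AB*AC/(na^2*nb*nc) := by
    have h1 : σ * |k| = -k := by rw [hσd]; field_simp
    rw [h1, hk, neg_div, neg_neg]
  set nf : Fin 3 → ℝ := ![n0,n1,n2] with hnf
  set uf : Fin 3 → ℝ := ![u0,u1,u2] with huf
  set wf : Fin 3 → ℝ := ![w0,w1,w2] with hwf
  set U : Matrix (Fin 3) (Fin 2) ℝ :=
    Matrix.of (fun i j => if j = 0 then nf i/sn else σ*uf i/(nb*sn)) with hUd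
  set V : Matrix (Fin 3) (Fin 2) ℝ :=
    Matrix.of (fun i j => if j = 0 then nf i/sn else wf i/(nc*sn)) with hVd
  have hU : Uᵀ*U = 1 := by
    ext i j
    fin_cases i <;> fin_cases j <;>
      simp [hUd, hnf, huf, Matrix.mul_apply, Fin.sum_univ_three, Matrix.one_apply]
    · field_simp
      linear_combination hnn - hsn2
    · linear_combination (σ/(nb*sn^2)) * hnu
    · linear_combination (σ/(nb*sn^2)) * hnu
    · field_simp
      linear_combination (u0^2+u1^2+u2^2)*hσ2 + huu - nb^2*hsn2
  have hV : Vᵀ*V = 1 := by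
    ext i j
    fin_cases i <;> fin_cases j <;>
      simp [hVd, hnf, hwf, Matrix.mul_apply, Fin.sum_univ_three, Matrix.one_apply]
    · field_simp
      linear_combination hnn - hsn2
    · linear_combination (1/(nc*sn^2)) * hnw
    · linear_combination (1/(nc*sn^2)) * hnw
    · field_simp
      linear_combination hww - nc^2*hsn2
  set Q1 : Matrix (Fin 3) (Fin 3) ℝ :=
    Matrix.of (fun i j => nb^2*(if i = j then (1:ℝ) else 0) - b i * b j) with hQ1
  set Q2 : Matrix (Fin 3) (Fin 3) ℝ :=
    Matrix.of (fun i j => na^2*(if i = j then (1:ℝ) else 0) - a i * a j) with hQ2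
  set Q3 : Matrix (Fin 3) (Fin 3) ℝ :=
    Matrix.of (fun i j => nc^2*(if i = j then (1:ℝ) else 0) - (b i - a i)*(b j - a j)) with hQ3
  have hP1' : P1 = (nb^2)⁻¹ • Q1 := by
    ext i j
    rw [hP1]
    simp only [hQ1, Matrix.smul_apply, Matrix.of_apply, smul_eq_mul]
    field_simp
  have hP2' : P2 = (na^2)⁻¹ • Q2 := by
    ext i j
    rw [hP2]
    simp only [hQ2, Matrix.smul_apply, Matrix.of_apply, smul_eq_mul]
    field_simp
  have hP3' : P3 = (nc^2)⁻¹ • Q3 := by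
    ext i j
    rw [hP3]
    simp only [hQ3, Matrix.smul_apply, Matrix.of_apply, smul_eq_mul]
    field_simp
  have hT : ∀ i j, (P1*P2*P3) i j = (Q1*Q2*Q3) i j / (na^2*nb^2*nc^2) := by
    intro i j
    rw [hP1', hP2', hP3']
    simp only [Matrix.smul_mul, Matrix.mul_smul, smul_smul, Matrix.smul_apply, smul_eq_mul]
    field_simp
  have h2 : ∀ i j, N * (Q1*Q2*Q3) i j
      = (na^2*nb^2*nc^2)*(nf i * nf j) + (AB*AC)*(uf i * wf j) := by
    intro i j
    fin_cases i <;> fin_cases j <;>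
      (simp [hQ1, hQ2, hQ3, hnf, huf, hwf, Matrix.mul_apply, Fin.sum_univ_three,
         Fin.isValue, Matrix.cons_val_zero, Matrix.cons_val_one, Matrix.head_cons];
       simp only [hNdef, hna2, hnb2, hnc2, hAB, hACd, hn0, hn1, hn2, hu0, hu1, hu2,
         hw0, hw1, hw2, hn0, hn1, hn2];
       ring)
  have hD0 : (na^2*nb^2*nc^2 : ℝ) ≠ 0 := by positivity
  have hDsn0 : (na^2*nb^2*nc^2*sn^2 : ℝ) ≠ 0 := by positivity
  have h3 : ∀ i j, (U * Matrix.diagonal ![1,|k|] * Vᵀ) i j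
      = (na^2*nb^2*nc^2*(nf i * nf j) + (AB*AC)*(uf i * wf j))/(na^2*nb^2*nc^2*sn^2) := by
    intro i j
    simp [hUd, hVd, Matrix.mul_apply, Fin.sum_univ_two, Matrix.diagonal_apply,
      Matrix.transpose_apply]
    have hone : nb^2*nb⁻¹^2*nc^2*nc⁻¹^2*na^2*na⁻¹^2 = 1 := by field_simp
    linear_combination ((uf i * wf j)/(nb*nc*sn^2)) * hσK - (nf i * sn⁻¹^2 * nf j) * hone
  have hM : P1*P2*P3 = U * Matrix.diagonal ![1,|k|] * Vᵀ := by
    ext i j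
    rw [hT, h3]
    have h2' := h2 i j
    rw [← hsn2] at h2'
    rw [div_eq_div_iff hD0 hDsn0]
    linear_combination (na^2*nb^2*nc^2) * h2'
  have hDunit : IsUnit (Matrix.diagonal ![(1:ℝ),|k|]) := by
    rw [Matrix.isUnit_iff_isUnit_det, Matrix.det_diagonal, Fin.prod_univ_two]
    simp only [Matrix.cons_val_zero, Matrix.cons_val_one, Matrix.head_cons, one_mul]
    exact isUnit_iff_ne_zero.mpr hkabs
  have hrank : (P1*P2*P3).rank = 2 := by
    have hle : (P1*P2*P3).rank ≤ 2 := by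
      rw [hM]
      calc (U * Matrix.diagonal ![(1:ℝ),|k|] * Vᵀ).rank
          ≤ (U * Matrix.diagonal ![(1:ℝ),|k|]).rank := Matrix.rank_mul_le_left _ _
        _ ≤ Fintype.card (Fin 2) := Matrix.rank_le_card_width _
        _ = 2 := by simp
    have hDeq : Uᵀ*(P1*P2*P3)*V = Matrix.diagonal ![(1:ℝ),|k|] := by
      rw [hM]
      calc Uᵀ*(U * Matrix.diagonal ![(1:ℝ),|k|] * Vᵀ)*V
          = (Uᵀ*U) * (Matrix.diagonal ![(1:ℝ),|k|] * (Vᵀ*V)) := by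
            simp only [Matrix.mul_assoc]
        _ = _ := by rw [hU, hV, Matrix.one_mul, Matrix.mul_one]
    have h4 : (Matrix.diagonal ![(1:ℝ),|k|]).rank = 2 := by
      rw [Matrix.rank_of_isUnit _ hDunit]; simp
    have hge : 2 ≤ (P1*P2*P3).rank := by
      calc 2 = (Uᵀ*(P1*P2*P3)*V).rank := by rw [hDeq, h4]
        _ ≤ (Uᵀ*(P1*P2*P3)).rank := Matrix.rank_mul_le_left _ _
        _ ≤ (P1*P2*P3).rank := Matrix.rank_mul_le_right _ _
    omega
  refine ⟨hrank, U, V, hU, hV, hM, ?_⟩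
  rw [max_eq_left hk1, min_eq_right hk1]


/-- Orthogonal projection matrix onto the plane perpendicular to `x - y`. -/
noncomputable def projMat (x y : EuclideanSpace ℝ (Fin 3)) : Matrix (Fin 3) (Fin 3) ℝ :=
  1 - (‖x - y‖ ^ 2)⁻¹ • Matrix.vecMulVec (fun i => (x - y) i) (fun i => (x - y) i)

/-- Lemma B.1: the matrix `P(x_r,y₀) P(x_s,x_r) P(y₀,x_s)` has rank 2, nonzero singular
values `1` and `|cos θ_r cos θ_s|`, hence condition number `1/|cos θ_r cos θ_s|`. -/
theorem projector_product_rank_and_condition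
    (xr xs y0 : EuclideanSpace ℝ (Fin 3))
    (hnc : ¬ Collinear ℝ ({xr, xs, y0} : Set (EuclideanSpace ℝ (Fin 3))))
    (hcos : Real.cos (InnerProductGeometry.angle (xs - xr) (y0 - xr))
            * Real.cos (InnerProductGeometry.angle (xr - xs) (y0 - xs)) ≠ 0) :
    (projMat xr y0 * projMat xs xr * projMat y0 xs).rank = 2 ∧
    ∃ U V : Matrix (Fin 3) (Fin 2) ℝ,
      Uᵀ * U = 1 ∧ Vᵀ * V = 1 ∧
      projMat xr y0 * projMat xs xr * projMat y0 xs
        = U * Matrix.diagonal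
            ![1, |Real.cos (InnerProductGeometry.angle (xs - xr) (y0 - xr))
                  * Real.cos (InnerProductGeometry.angle (xr - xs) (y0 - xs))|] * Vᵀ ∧
      (1 : ℝ) / |Real.cos (InnerProductGeometry.angle (xs - xr) (y0 - xr))
                  * Real.cos (InnerProductGeometry.angle (xr - xs) (y0 - xs))|
        = max 1 |Real.cos (InnerProductGeometry.angle (xs - xr) (y0 - xr))
                  * Real.cos (InnerProductGeometry.angle (xr - xs) (y0 - xs))|
          / min 1 |Real.cos (InnerProductGeometry.angle (xs - xr) (y0 - xr))
                  * Real.cos (InnerProductGeometry.angle (xr - xs) (y0 - xs))| := by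
  have h12 : xr ≠ xs := ne₁₂_of_not_collinear hnc
  have h13 : xr ≠ y0 := ne₁₃_of_not_collinear hnc
  have h23 : xs ≠ y0 := ne₂₃_of_not_collinear hnc
  have hsub : ∀ (x y : EuclideanSpace ℝ (Fin 3)) (i : Fin 3), (x - y) i = x i - y i :=
    fun _ _ _ => rfl
  set k := Real.cos (InnerProductGeometry.angle (xs - xr) (y0 - xr))
      * Real.cos (InnerProductGeometry.angle (xr - xs) (y0 - xs)) with hkdef
  have hk1 : |k| ≤ 1 := by
    rw [hkdef, abs_mul]
    exact mul_le_one₀ (Real.abs_cos_le_one _) (abs_nonneg _) (Real.abs_cos_le_one _)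
  have hna : 0 < ‖xs - xr‖ := norm_pos_iff.mpr (sub_ne_zero.mpr h12.symm)
  have hnb : 0 < ‖y0 - xr‖ := norm_pos_iff.mpr (sub_ne_zero.mpr h13.symm)
  have hncc : 0 < ‖y0 - xs‖ := norm_pos_iff.mpr (sub_ne_zero.mpr h23.symm)
  have hinner : ∀ (x y : EuclideanSpace ℝ (Fin 3)), ⟪x,y⟫ = x 0*y 0 + x 1*y 1 + x 2*y 2 := by
    intro x y
    simp [PiLp.inner_apply, RCLike.inner_apply, conj_trivial, Fin.sum_univ_three]
    ring
  have hnorm2 : ∀ (x : EuclideanSpace ℝ (Fin 3)), ‖x‖^2 = x 0^2 + x 1^2 + x 2^2 := by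
    intro x
    rw [← real_inner_self_eq_norm_sq, hinner]
    ring
  have hba : ∀ i : Fin 3, (y0 - xr) i - (xs - xr) i = (y0 - xs) i := by
    intro i; simp [hsub]; try ring
  have hcol : ∀ (t : ℝ), y0 - xr ≠ t • (xs - xr) := by
    intro t ht
    apply hnc
    rw [collinear_iff_exists_forall_eq_smul_vadd]
    refine ⟨xr, xs - xr, ?_⟩
    intro p hp
    simp only [Set.mem_insert_iff, Set.mem_singleton_iff] at hp
    rcases hp with rfl | rfl | rfl
    · exact ⟨0, by simp⟩
    · exact ⟨1, by simp⟩
    · refine ⟨t, ?_⟩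
      rw [← ht]
      simp
  have h1 : ⟪xs - xr, y0 - xr⟫ < ‖xs - xr‖ * ‖y0 - xr‖ := by
    refine inner_lt_norm_mul_iff_real.mpr ?_
    intro heq
    apply hcol (‖y0 - xr‖ * ‖xs - xr‖⁻¹)
    have := congrArg (fun z => (‖xs - xr‖)⁻¹ • z) heq
    simp only [smul_smul] at this
    rw [inv_mul_cancel₀ hna.ne', one_smul] at this
    rw [mul_comm ‖xs - xr‖⁻¹ ‖y0 - xr‖] at this
    exact this.symm
  have h2 : ⟪-(xs - xr), y0 - xr⟫ < ‖-(xs - xr)‖ * ‖y0 - xr‖ := by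
    refine inner_lt_norm_mul_iff_real.mpr ?_
    intro heq
    apply hcol (-(‖y0 - xr‖ * ‖xs - xr‖⁻¹))
    have := congrArg (fun z => (‖xs - xr‖)⁻¹ • z) heq
    simp only [smul_smul, norm_neg, smul_neg] at this
    rw [inv_mul_cancel₀ hna.ne', one_smul] at this
    rw [mul_comm ‖xs - xr‖⁻¹ ‖y0 - xr‖] at this
    rw [← neg_smul] at this
    exact this.symm
  rw [inner_neg_left, norm_neg] at h2
  have hN' : 0 < ((xs-xr) 0^2+(xs-xr) 1^2+(xs-xr) 2^2)*((y0-xr) 0^2+(y0-xr) 1^2+(y0-xr) 2^2)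
      - ((xs-xr) 0*(y0-xr) 0+(xs-xr) 1*(y0-xr) 1+(xs-xr) 2*(y0-xr) 2)^2 := by
    rw [← hnorm2 (xs - xr), ← hnorm2 (y0 - xr), ← hinner (xs - xr) (y0 - xr)]
    nlinarith [h1, h2, mul_pos hna hnb]
  have hk' : k = -(((xs-xr) 0*(y0-xr) 0+(xs-xr) 1*(y0-xr) 1+(xs-xr) 2*(y0-xr) 2)
      * ((xs-xr) 0*((y0-xr) 0-(xs-xr) 0)+(xs-xr) 1*((y0-xr) 1-(xs-xr) 1)
        +(xs-xr) 2*((y0-xr) 2-(xs-xr) 2)))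
      / (‖xs - xr‖^2*‖y0 - xr‖*‖y0 - xs‖) := by
    rw [hkdef, InnerProductGeometry.cos_angle, InnerProductGeometry.cos_angle,
      hinner, hinner, norm_sub_rev xr xs]
    have e1 : ∀ i : Fin 3, (xr - xs) i = -((xs - xr) i) := by intro i; simp [hsub]; try ring
    rw [e1 0, e1 1, e1 2, ← hba 0, ← hba 1, ← hba 2]
    field_simp
    ring
  have hP1' : ∀ i j, projMat xr y0 i j
      = (if i = j then (1:ℝ) else 0) - (y0-xr) i * (y0-xr) j/‖y0 - xr‖^2 := by
    intro i j
    simp [projMat, Matrix.vecMulVec_apply, Matrix.sub_apply, Matrix.one_apply,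
      smul_eq_mul, norm_sub_rev xr y0, hsub]
    ring
  have hP2' : ∀ i j, projMat xs xr i j
      = (if i = j then (1:ℝ) else 0) - (xs-xr) i * (xs-xr) j/‖xs - xr‖^2 := by
    intro i j
    simp [projMat, Matrix.vecMulVec_apply, Matrix.sub_apply, Matrix.one_apply,
      smul_eq_mul, hsub]
    ring
  have hP3' : ∀ i j, projMat y0 xs i j
      = (if i = j then (1:ℝ) else 0)
        - ((y0-xr) i - (xs-xr) i) * ((y0-xr) j - (xs-xr) j)/‖y0 - xs‖^2 := by
    intro i j
    simp [projMat, Matrix.vecMulVec_apply, Matrix.sub_apply, Matrix.one_apply,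
      smul_eq_mul, hsub]
    ring
  exact aux (fun i => (xs - xr) i) (fun i => (y0 - xr) i) ‖xs - xr‖ ‖y0 - xr‖ ‖y0 - xs‖ k
    (hnorm2 (xs - xr)) hna (hnorm2 (y0 - xr)) hnb
    (by rw [hba 0, hba 1, hba 2]; exact hnorm2 (y0 - xs)) hncc
    hN' hk' hcos hk1 _ _ _ hP1' hP2' hP3'
end

section
/- Let z be a unit vector orthogonal to both y₀ − x_s and y₀ − x_r, where x_r, x_s, y₀ ∈ ℝ³ are non-collinear. Set U_{rs} = [z, z×(x_r−x_s)/|z×(x_r−x_s)|] and U_{j0} = [z, z×(y₀−x_j)/|z×(y₀−x_j)|] for j = r, s. Then U_{j0}* U_{rs} = diag(1, cos θ_j), where θ_j is the angle at vertex x_j of the triangle with vertices x_r, x_s, y₀ (possibly up to a sign in the second diagonal entry). -/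
open Matrix
open scoped RealInnerProductSpace

/-- Cross product of vectors in `ℝ³` (as Euclidean space). -/
noncomputable def cross3 (u v : EuclideanSpace ℝ (Fin 3)) : EuclideanSpace ℝ (Fin 3) :=
  (WithLp.equiv 2 (Fin 3 → ℝ)).symm
    ![u 1 * v 2 - u 2 * v 1, u 2 * v 0 - u 0 * v 2, u 0 * v 1 - u 1 * v 0]

/-- The 3×2 matrix with the given columns. -/
noncomputable def colMat (u v : EuclideanSpace ℝ (Fin 3)) : Matrix (Fin 3) (Fin 2) ℝ :=
  Matrix.of fun i j => ![u, v] j i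

lemma inner3 (x y : EuclideanSpace ℝ (Fin 3)) : ⟪x,y⟫ = x 0 * y 0 + x 1 * y 1 + x 2 * y 2 := by
  simp [PiLp.inner_apply, Fin.sum_univ_three, RCLike.inner_apply, conj_trivial]; ring
lemma cross3_0 (u v : EuclideanSpace ℝ (Fin 3)) : cross3 u v 0 = u 1 * v 2 - u 2 * v 1 := rfl
lemma cross3_1 (u v : EuclideanSpace ℝ (Fin 3)) : cross3 u v 1 = u 2 * v 0 - u 0 * v 2 := rfl
lemma cross3_2 (u v : EuclideanSpace ℝ (Fin 3)) : cross3 u v 2 = u 0 * v 1 - u 1 * v 0 := rfl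
lemma inner_z_cross (z w : EuclideanSpace ℝ (Fin 3)) : ⟪z, cross3 z w⟫ = 0 := by
  rw [inner3, cross3_0, cross3_1, cross3_2]; ring
lemma inner_cross_cross (z w v : EuclideanSpace ℝ (Fin 3)) :
    ⟪cross3 z w, cross3 z v⟫ = ⟪z,z⟫ * ⟪w,v⟫ - ⟪z,v⟫ * ⟪w,z⟫ := by
  simp only [inner3, cross3_0, cross3_1, cross3_2]; ring
lemma norm_cross (z w : EuclideanSpace ℝ (Fin 3)) (hz : ‖z‖ = 1) (hzw : ⟪z,w⟫ = 0) :
    ‖cross3 z w‖ = ‖w‖ := by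
  have h : ⟪cross3 z w, cross3 z w⟫ = ⟪w,w⟫ := by
    rw [inner_cross_cross, real_inner_self_eq_norm_sq, hz, hzw]; ring
  have h2 : ‖cross3 z w‖^2 = ‖w‖^2 := by
    rw [← real_inner_self_eq_norm_sq, ← real_inner_self_eq_norm_sq, h]
  calc ‖cross3 z w‖ = Real.sqrt (‖cross3 z w‖^2) := (Real.sqrt_sq (norm_nonneg _)).symm
    _ = Real.sqrt (‖w‖^2) := by rw [h2]
    _ = ‖w‖ := Real.sqrt_sq (norm_nonneg _)
lemma colMat_prod (u v u' v' : EuclideanSpace ℝ (Fin 3)) :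
    (colMat u v)ᵀ * colMat u' v' = Matrix.of ![![⟪u,u'⟫, ⟪u,v'⟫], ![⟪v,u'⟫, ⟪v,v'⟫]] := by
  refine Matrix.ext fun i j => ?_
  fin_cases i <;> fin_cases j <;>
    simp [Matrix.mul_apply, colMat, Fin.sum_univ_three, inner3]
lemma prod_eq (z w v : EuclideanSpace ℝ (Fin 3)) (hz : ‖z‖ = 1)
    (hzw : ⟪z,w⟫ = 0) (hzv : ⟪z,v⟫ = 0) :
    (colMat z ((‖cross3 z w‖)⁻¹ • cross3 z w))ᵀ * colMat z ((‖cross3 z v‖)⁻¹ • cross3 z v)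
      = Matrix.diagonal ![1, ⟪w,v⟫ / (‖w‖ * ‖v‖)] := by
  have hzz : ⟪z,z⟫ = 1 := by rw [real_inner_self_eq_norm_sq, hz]; norm_num
  have hwz : ⟪w,z⟫ = 0 := by rw [real_inner_comm]; exact hzw
  rw [colMat_prod]
  have e1 : ⟪z, (‖cross3 z v‖)⁻¹ • cross3 z v⟫ = 0 := by
    rw [real_inner_smul_right, inner_z_cross]; ring
  have e2 : ⟪(‖cross3 z w‖)⁻¹ • cross3 z w, z⟫ = 0 := by
    rw [real_inner_smul_left, real_inner_comm, inner_z_cross]; ring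
  have e3 : ⟪(‖cross3 z w‖)⁻¹ • cross3 z w, (‖cross3 z v‖)⁻¹ • cross3 z v⟫
      = ⟪w,v⟫ / (‖w‖ * ‖v‖) := by
    rw [real_inner_smul_left, real_inner_smul_right, inner_cross_cross, hzz, hzv, hwz,
      norm_cross z w hz hzw, norm_cross z v hz hzv]
    field_simp
    simp
  rw [hzz, e1, e2, e3]
  refine Matrix.ext fun i j => ?_
  fin_cases i <;> fin_cases j <;> simp [Matrix.diagonal]


/-- Appendix B computation: `U_{j0}ᵀ U_{rs} = diag(1, cos θ_j)` up to a sign in the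
second diagonal entry, for `j = r, s`. -/
theorem svd_basis_angle_computation
    (xr xs y0 z : EuclideanSpace ℝ (Fin 3))
    (hnc : ¬ Collinear ℝ ({xr, xs, y0} : Set (EuclideanSpace ℝ (Fin 3))))
    (hz : ‖z‖ = 1) (hzs : ⟪z, y0 - xs⟫ = 0) (hzr : ⟪z, y0 - xr⟫ = 0) :
    let Urs := colMat z ((‖cross3 z (xr - xs)‖)⁻¹ • cross3 z (xr - xs))
    let Ur0 := colMat z ((‖cross3 z (y0 - xr)‖)⁻¹ • cross3 z (y0 - xr))
    let Us0 := colMat z ((‖cross3 z (y0 - xs)‖)⁻¹ • cross3 z (y0 - xs))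
    ∃ εr εs : ℝ, (εr = 1 ∨ εr = -1) ∧ (εs = 1 ∨ εs = -1) ∧
      Ur0ᵀ * Urs
        = Matrix.diagonal ![1, εr * Real.cos (InnerProductGeometry.angle (xs - xr) (y0 - xr))] ∧
      Us0ᵀ * Urs
        = Matrix.diagonal ![1, εs * Real.cos (InnerProductGeometry.angle (xr - xs) (y0 - xs))] := by
  intro Urs Ur0 Us0
  have hza : ⟪z, xr - xs⟫ = 0 := by
    have : (xr - xs : EuclideanSpace ℝ (Fin 3)) = (y0 - xs) - (y0 - xr) := by abel
    rw [this, inner_sub_right, hzs, hzr]; ring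
  refine ⟨-1, 1, Or.inr rfl, Or.inl rfl, ?_, ?_⟩
  · show Ur0ᵀ * Urs = _
    rw [show Ur0ᵀ * Urs = _ from prod_eq z (y0 - xr) (xr - xs) hz hzr hza]
    congr 1
    have : (xs - xr : EuclideanSpace ℝ (Fin 3)) = -(xr - xs) := by abel
    rw [InnerProductGeometry.cos_angle, this, inner_neg_left, norm_neg,
      real_inner_comm (xr - xs) (y0 - xr)]
    congr 1
    rw [mul_comm ‖y0 - xr‖]
    ring
  · show Us0ᵀ * Urs = _
    rw [show Us0ᵀ * Urs = _ from prod_eq z (y0 - xs) (xr - xs) hz hzs hza]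
    congr 1
    rw [InnerProductGeometry.cos_angle, real_inner_comm (xr - xs) (y0 - xs)]
    congr 1
    rw [mul_comm ‖y0 - xs‖]
    ring
end

section
/- Let f, g ∈ L¹(ℝ) with Fourier transforms f̂(ω) = (1/2π)∫ f(t) e^{iωt} dt, ĝ(ω), and let a, b ∈ ℝ, T > 0. Then (1/(2T)²) ∫_{−T}^{T} ∫_{−T}^{T} f(t − t' + a) g(t' − t + b) dt dt' = ∫∫ f̂(ω) ĝ(ω') e^{−iωa} e^{−iω'b} sinc²(T(ω − ω')) dω dω', where sinc(u) = sin(u)/u. -/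
open MeasureTheory

/-- `sinc u = sin u / u`, with `sinc 0 = 1`. -/
noncomputable def sinc (t : ℝ) : ℝ := if t = 0 then 1 else Real.sin t / t


lemma abs_sinc_le_one (t : ℝ) : |sinc t| ≤ 1 := by
  unfold sinc
  split
  · simp
  · next h =>
    rw [abs_div, div_le_one (abs_pos.mpr h)]
    exact Real.abs_sin_le_abs

lemma sinc_neg (t : ℝ) : sinc (-t) = sinc t := by
  unfold sinc
  rcases eq_or_ne t 0 with h | h
  · simp [h]
  · rw [if_neg (neg_ne_zero.mpr h), if_neg h, Real.sin_neg, neg_div_neg_eq]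

lemma integral_exp_neg_Icc {T : ℝ} (hT : 0 < T) (c : ℝ) :
    ∫ t in Set.Icc (-T) T, Complex.exp (-(Complex.I * (c : ℂ) * (t : ℂ)))
      = ((2 * T * sinc (T * c) : ℝ) : ℂ) := by
  rw [MeasureTheory.integral_Icc_eq_integral_Ioc,
    ← intervalIntegral.integral_of_le (by linarith : -T ≤ T)]
  rcases eq_or_ne c 0 with hc | hc
  · simp [hc, sinc]

    ring
  · have h2 : (-(Complex.I * (c : ℂ)) : ℂ) ≠ 0 :=
      neg_ne_zero.mpr (mul_ne_zero Complex.I_ne_zero (Complex.ofReal_ne_zero.mpr hc))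
    have harg : ∀ t : ℝ, -(Complex.I * (c : ℂ) * (t : ℂ)) = (-(Complex.I * (c : ℂ))) * (t : ℂ) := by
      intro t; ring
    simp_rw [harg]
    rw [integral_exp_mul_complex h2]
    have e1 : (-(Complex.I * (c : ℂ))) * (T : ℂ) = ((-(T * c) : ℝ) : ℂ) * Complex.I := by
      push_cast; ring
    have e2 : (-(Complex.I * (c : ℂ))) * ((-T : ℝ) : ℂ) = ((T * c : ℝ) : ℂ) * Complex.I := by
      push_cast; ring
    rw [e1, e2, Complex.exp_mul_I, Complex.exp_mul_I]
    have hTc : T * c ≠ 0 := mul_ne_zero hT.ne' hc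
    rw [div_eq_iff h2]
    unfold sinc
    rw [if_neg hTc]
    have hre : (2 * T * (Real.sin (T * c) / (T * c)) : ℝ) = 2 * Real.sin (T * c) / c := by
      field_simp
    rw [hre]
    have hc' : (c : ℂ) ≠ 0 := Complex.ofReal_ne_zero.mpr hc
    push_cast [Real.cos_neg, Real.sin_neg, Complex.cos_neg, Complex.sin_neg]
    field_simp
    ring

lemma measurable_sinc : Measurable sinc := by
  unfold sinc
  exact Measurable.ite (measurableSet_eq_fun measurable_id measurable_const)
    measurable_const (Real.measurable_sin.div measurable_id)

/-- Double-integral identity from the proof of Proposition 6.1 (Appendix A):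
time averages of products of shifted signals reduce to frequency integrals against the
Fejér-type kernel `sinc²(T(ω−ω'))`. -/
theorem time_average_fejer_identity
    (f g fhat ghat : ℝ → ℂ)
    (hf : Integrable f) (hg : Integrable g)
    (hfhat : Integrable fhat) (hghat : Integrable ghat)
    (hfhat_def : ∀ ω : ℝ, fhat ω
      = (1 / (2 * Real.pi) : ℂ) * ∫ t : ℝ, f t * Complex.exp (Complex.I * (ω : ℂ) * (t : ℂ)))
    (hghat_def : ∀ ω : ℝ, ghat ω
      = (1 / (2 * Real.pi) : ℂ) * ∫ t : ℝ, g t * Complex.exp (Complex.I * (ω : ℂ) * (t : ℂ)))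
    (hfinv : ∀ t : ℝ, f t = ∫ ω : ℝ, fhat ω * Complex.exp (-(Complex.I * (ω : ℂ) * (t : ℂ))))
    (hginv : ∀ t : ℝ, g t = ∫ ω : ℝ, ghat ω * Complex.exp (-(Complex.I * (ω : ℂ) * (t : ℂ))))
    (a b T : ℝ) (hT : 0 < T) :
    ((1 / (2 * T) ^ 2 : ℝ) : ℂ)
        * ∫ t in Set.Icc (-T) T, ∫ t' in Set.Icc (-T) T, f (t - t' + a) * g (t' - t + b)
      = ∫ ω : ℝ, ∫ ω' : ℝ,
          fhat ω * ghat ω' * Complex.exp (-(Complex.I * (ω : ℂ) * (a : ℂ)))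
            * Complex.exp (-(Complex.I * (ω' : ℂ) * (b : ℂ)))
            * ((sinc (T * (ω - ω')) ^ 2 : ℝ) : ℂ) := by
  set μ : Measure ℝ := volume.restrict (Set.Icc (-T) T) with hμ
  haveI : IsFiniteMeasure μ := ⟨by rw [hμ, Measure.restrict_apply_univ]; exact measure_Icc_lt_top⟩
  set H : ℝ × ℝ → ℝ × ℝ → ℂ := fun p q =>
    fhat q.1 * ghat q.2 * Complex.exp (-(Complex.I * (q.1 : ℂ) * ((p.1 - p.2 + a : ℝ) : ℂ)))
      * Complex.exp (-(Complex.I * (q.2 : ℂ) * ((p.2 - p.1 + b : ℝ) : ℂ))) with hH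
  set C : ℝ × ℝ → ℂ := fun q =>
    fhat q.1 * ghat q.2 * Complex.exp (-(Complex.I * (q.1 : ℂ) * (a : ℂ)))
      * Complex.exp (-(Complex.I * (q.2 : ℂ) * (b : ℂ))) with hC
  -- Step A: pointwise expansion of the product via the inversion formulas
  have stepA : ∀ t t' : ℝ, f (t - t' + a) * g (t' - t + b)
      = ∫ q : ℝ × ℝ, H (t, t') q ∂(volume.prod volume) := by
    intro t t'
    rw [hfinv (t - t' + a), hginv (t' - t + b), ← integral_prod_mul]
    congr 1
    funext q
    simp only [hH]
    ring
  -- Integrability of H on the big product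
  have hexpnorm : ∀ (ω t : ℝ), ‖Complex.exp (-(Complex.I * (ω : ℂ) * (t : ℂ)))‖ = 1 := by
    intro ω t
    rw [Complex.norm_exp]
    simp [Complex.exp_re]
  have hHmeas : AEStronglyMeasurable (fun z : (ℝ × ℝ) × (ℝ × ℝ) => H z.1 z.2)
      ((μ.prod μ).prod (volume.prod volume)) := by
    simp only [hH]
    apply AEStronglyMeasurable.mul
    apply AEStronglyMeasurable.mul
    apply AEStronglyMeasurable.mul
    · exact (hfhat.aestronglyMeasurable.comp_fst (ν := volume)).comp_snd (ν := volume.prod volume)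
    · exact (hghat.aestronglyMeasurable.comp_snd (μ := volume)).comp_snd (ν := volume.prod volume)
    · refine Continuous.aestronglyMeasurable ?_
      fun_prop
    · refine Continuous.aestronglyMeasurable ?_
      fun_prop
  have hHint : Integrable (fun z : (ℝ × ℝ) × (ℝ × ℝ) => H z.1 z.2)
      ((μ.prod μ).prod (volume.prod volume)) := by
    refine Integrable.mono'
      ((integrable_const (1 : ℝ)).mul_prod (hfhat.norm.mul_prod hghat.norm)) hHmeas ?_
    filter_upwards with z
    simp only [hH, norm_mul, hexpnorm, one_mul, mul_one]
    exact le_of_eq rfl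
  -- inner integral computation
  have hinner : ∀ q : ℝ × ℝ, (∫ p, H p q ∂(μ.prod μ))
      = C q * ((2 * T * sinc (T * (q.1 - q.2)) : ℝ) : ℂ) ^ 2 := by
    intro q
    have key : ∀ p : ℝ × ℝ, H p q
        = C q * (Complex.exp (-(Complex.I * ((q.1 - q.2 : ℝ) : ℂ) * (p.1 : ℂ)))
            * Complex.exp (-(Complex.I * ((q.2 - q.1 : ℝ) : ℂ) * (p.2 : ℂ)))) := by
      intro p
      simp only [hH, hC]
      rw [mul_assoc (fhat q.1 * ghat q.2), ← Complex.exp_add]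
      rw [show -(Complex.I * (q.1 : ℂ) * ((p.1 - p.2 + a : ℝ) : ℂ))
            + -(Complex.I * (q.2 : ℂ) * ((p.2 - p.1 + b : ℝ) : ℂ))
          = -(Complex.I * (q.1 : ℂ) * (a : ℂ)) + -(Complex.I * (q.2 : ℂ) * (b : ℂ))
            + (-(Complex.I * ((q.1 - q.2 : ℝ) : ℂ) * (p.1 : ℂ))
              + -(Complex.I * ((q.2 - q.1 : ℝ) : ℂ) * (p.2 : ℂ))) from by push_cast; ring]
      rw [Complex.exp_add, Complex.exp_add, Complex.exp_add]
      ring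
    simp_rw [key]
    rw [integral_const_mul,
      integral_prod_mul (μ := μ) (ν := μ)
        (f := fun t : ℝ => Complex.exp (-(Complex.I * ((q.1 - q.2 : ℝ) : ℂ) * (t : ℂ))))
        (g := fun t : ℝ => Complex.exp (-(Complex.I * ((q.2 - q.1 : ℝ) : ℂ) * (t : ℂ)))),
      hμ, integral_exp_neg_Icc hT, integral_exp_neg_Icc hT]
    rw [show T * (q.2 - q.1) = -(T * (q.1 - q.2)) from by ring, sinc_neg]
    ring
  -- RHS integrability
  have hRmeas : AEStronglyMeasurable
      (fun q : ℝ × ℝ => C q * ((sinc (T * (q.1 - q.2)) ^ 2 : ℝ) : ℂ))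
      (volume.prod volume) := by
    simp only [hC]
    apply AEStronglyMeasurable.mul
    apply AEStronglyMeasurable.mul
    apply AEStronglyMeasurable.mul
    apply AEStronglyMeasurable.mul
    · exact hfhat.aestronglyMeasurable.comp_fst
    · exact hghat.aestronglyMeasurable.comp_snd
    · exact (Continuous.aestronglyMeasurable (by fun_prop))
    · exact (Continuous.aestronglyMeasurable (by fun_prop))
    · refine Measurable.aestronglyMeasurable ?_
      exact Complex.measurable_ofReal.comp
        (((measurable_sinc.comp ((measurable_fst.sub measurable_snd).const_mul T)).pow_const 2))
  have hRint : Integrable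
      (fun q : ℝ × ℝ => C q * ((sinc (T * (q.1 - q.2)) ^ 2 : ℝ) : ℂ))
      (volume.prod volume) := by
    refine Integrable.mono' (hfhat.norm.mul_prod hghat.norm) hRmeas ?_
    filter_upwards with q
    simp only [hC, norm_mul, hexpnorm, mul_one]
    have h1 : ‖(((sinc (T * (q.1 - q.2)) ^ 2 : ℝ)) : ℂ)‖ ≤ 1 := by
      rw [Complex.norm_real, Real.norm_eq_abs, abs_pow, sq_abs, ← sq_abs]
      exact pow_le_one₀ (abs_nonneg _) (abs_sinc_le_one _)
    exact mul_le_of_le_one_right (mul_nonneg (norm_nonneg _) (norm_nonneg _)) h1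
  -- main chain
  have hiter : (∫ t in Set.Icc (-T) T, ∫ t' in Set.Icc (-T) T, f (t - t' + a) * g (t' - t + b))
      = ∫ q : ℝ × ℝ, ∫ p, H p q ∂(μ.prod μ) ∂(volume.prod volume) := by
    simp_rw [stepA]
    rw [MeasureTheory.integral_integral (f := fun t t' => ∫ q : ℝ × ℝ, H (t, t') q
        ∂(volume.prod volume)) (hHint.integral_prod_left)]
    exact integral_integral_swap hHint
  rw [hiter]
  simp_rw [hinner]
  rw [← integral_const_mul]
  rw [show (∫ ω : ℝ, ∫ ω' : ℝ,
          fhat ω * ghat ω' * Complex.exp (-(Complex.I * (ω : ℂ) * (a : ℂ)))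
            * Complex.exp (-(Complex.I * (ω' : ℂ) * (b : ℂ)))
            * ((sinc (T * (ω - ω')) ^ 2 : ℝ) : ℂ))
      = ∫ q : ℝ × ℝ, C q * ((sinc (T * (q.1 - q.2)) ^ 2 : ℝ) : ℂ) ∂(volume.prod volume) from
    (MeasureTheory.integral_prod _ hRint).symm]
  refine integral_congr_ae (Filter.Eventually.of_forall fun q => ?_)
  have hT' : ((T : ℂ)) ≠ 0 := Complex.ofReal_ne_zero.mpr hT.ne'
  push_cast
  field_simp
end
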